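/- Let c* > 0 be a constant. If k(n) = n/(log n)³ and m(n) = (log n)^{1/2}/√(2c*), then n · Σ_{l=2}^{m(n)} ( (2 c* k(n) m(n)² )/(n l) )^{l−1} · (2 c* m(n)²)/(e^l √l) → 0 as n → ∞; in particular the variance bound Σ_{l=2}^{m} C(m−1,l−1)² c^l k^{l−1} / C(n,l) is o(1/n) · o(1) — i.e., it is o(n^{−1}) suitably interpreted, so the higher-order U-statistic terms contribute variance of order o(1/n). -/

import Mathlib

/-- with `k(n) = n/(log n)³` and `m(n) = (log n)^{1/2}/√(2c*)`, the
variance bound `n · (1/n) Σ_{l=2}^{m(n)} ((2c* k(n) m(n)²)/(n l))^{l−1} (2c* m(n)²)/(e^l √l)`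
tends to `0` as `n → ∞`. -/
theorem stmt15 (cs : ℝ) (hcs : 0 < cs) :
    Filter.Tendsto
      (fun n : ℕ =>
        (n : ℝ) *
          ((1 / (n : ℝ)) *
            ∑ l ∈ Finset.Icc 2 ⌊Real.sqrt (Real.log n) / Real.sqrt (2 * cs)⌋₊,
              ((2 * cs * ((n : ℝ) / (Real.log n) ^ 3) *
                    (Real.sqrt (Real.log n) / Real.sqrt (2 * cs)) ^ 2) /
                  ((n : ℝ) * l)) ^ (l - 1) *
                ((2 * cs * (Real.sqrt (Real.log n) / Real.sqrt (2 * cs)) ^ 2) /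
                  (Real.exp 1 ^ l * Real.sqrt l))))
      Filter.atTop (nhds 0) := by
  have hcs2 : (0:ℝ) < 2 * cs := by linarith
  have hs : 0 < Real.sqrt (2 * cs) := Real.sqrt_pos.2 hcs2
  have hg : Filter.Tendsto (fun n : ℕ => (Real.sqrt (2*cs))⁻¹ * (Real.sqrt (Real.log n))⁻¹)
      Filter.atTop (nhds 0) := by
    have hsq : Filter.Tendsto Real.sqrt Filter.atTop Filter.atTop := by
      apply Filter.tendsto_atTop_atTop.2
      intro b
      refine ⟨max (b^2) 0, fun a ha => ?_⟩
      have ha0 : 0 ≤ a := le_trans (le_max_right _ _) ha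
      have hb2 : b^2 ≤ a := le_trans (le_max_left _ _) ha
      nlinarith [Real.sq_sqrt ha0, Real.sqrt_nonneg a]
    have h1 : Filter.Tendsto (fun n : ℕ => Real.sqrt (Real.log n)) Filter.atTop Filter.atTop :=
      hsq.comp (Real.tendsto_log_atTop.comp tendsto_natCast_atTop_atTop)
    have := h1.inv_tendsto_atTop
    have h2 := this.const_mul ((Real.sqrt (2*cs))⁻¹)
    simpa using h2
  apply squeeze_zero' ?_ ?_ hg
  · filter_upwards with n
    apply mul_nonneg (by positivity)
    apply mul_nonneg (by positivity)
    apply Finset.sum_nonneg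
    intro l hl
    have hL : 0 ≤ Real.log n := by
      rcases Nat.eq_zero_or_pos n with h | h
      · simp [h]
      · exact Real.log_natCast_nonneg n
    positivity
  · filter_upwards [Filter.eventually_ge_atTop 3] with n hn3
    have hn1 : (1:ℝ) ≤ (n:ℝ) := by exact_mod_cast Nat.one_le_of_lt hn3
    have hn0 : (n:ℝ) ≠ 0 := by linarith
    have hL1 : 1 ≤ Real.log n := by
      have : Real.exp 1 ≤ (n:ℝ) := by
        have := Real.exp_one_lt_d9
        calc Real.exp 1 ≤ 2.7182818286 := this.le
          _ ≤ 3 := by norm_num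
          _ ≤ (n:ℝ) := by exact_mod_cast hn3
      calc (1:ℝ) = Real.log (Real.exp 1) := (Real.log_exp 1).symm
        _ ≤ Real.log n := Real.log_le_log (Real.exp_pos 1) this
    set L := Real.log n with hLdef
    have hL0 : (0:ℝ) < L := by linarith
    have hm : (Real.sqrt L / Real.sqrt (2*cs))^2 = L/(2*cs) := by
      rw [div_pow, Real.sq_sqrt hL0.le, Real.sq_sqrt hcs2.le]
    -- simplify n * (1/n * S) = S
    rw [← mul_assoc, mul_one_div, div_self hn0, one_mul]
    set M := ⌊Real.sqrt L / Real.sqrt (2*cs)⌋₊ with hMdef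
    have hterm : ∀ l ∈ Finset.Icc 2 M,
        ((2 * cs * ((n : ℝ) / L ^ 3) * (Real.sqrt L / Real.sqrt (2*cs)) ^ 2) /
            ((n : ℝ) * l)) ^ (l - 1) *
          ((2 * cs * (Real.sqrt L / Real.sqrt (2*cs)) ^ 2) /
            (Real.exp 1 ^ l * Real.sqrt l)) ≤ 1 / L := by
      intro l hl
      obtain ⟨hl2, -⟩ := Finset.mem_Icc.1 hl
      have hlr : (2:ℝ) ≤ (l:ℝ) := by exact_mod_cast hl2
      have hlpos : (0:ℝ) < (l:ℝ) := by linarith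
      have hX : 2 * cs * ((n : ℝ) / L ^ 3) * (Real.sqrt L / Real.sqrt (2*cs)) ^ 2
          = (n:ℝ) / L^2 := by
        rw [hm]; field_simp
      have hY : 2 * cs * (Real.sqrt L / Real.sqrt (2*cs)) ^ 2 = L := by
        rw [hm]; field_simp
      rw [hX, hY]
      have hbase : (n:ℝ) / L^2 / ((n:ℝ) * l) = 1 / (L^2 * l) := by
        field_simp
      rw [hbase]
      have hL2pos : (0:ℝ) < L^2 := by positivity
      have h1 : (1 / (L^2 * (l:ℝ))) ^ (l-1) ≤ 1 / L^2 := by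
        have hle : (1 / (L^2 * (l:ℝ))) ≤ 1 / L^2 := by
          apply one_div_le_one_div_of_le hL2pos
          nlinarith
        calc (1 / (L^2 * (l:ℝ))) ^ (l-1) ≤ (1 / L^2) ^ (l-1) := by
              apply pow_le_pow_left₀ (by positivity) hle
          _ ≤ (1 / L^2) ^ 1 := by
              apply pow_le_pow_of_le_one (by positivity)
              · rw [div_le_one hL2pos]; nlinarith
              · omega
          _ = 1 / L^2 := pow_one _
      have h2 : L / (Real.exp 1 ^ l * Real.sqrt l) ≤ L := by
        apply div_le_self hL0.le
        have he : (1:ℝ) ≤ Real.exp 1 ^ l := one_le_pow₀ (Real.one_le_exp (by norm_num))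
        have hsl : (1:ℝ) ≤ Real.sqrt l := by
          rw [show (1:ℝ) = Real.sqrt 1 by simp]
          exact Real.sqrt_le_sqrt (by linarith)
        nlinarith
      calc (1 / (L^2 * (l:ℝ))) ^ (l-1) * (L / (Real.exp 1 ^ l * Real.sqrt l))
          ≤ (1 / L^2) * L := by
            apply mul_le_mul h1 h2 (by positivity) (by positivity)
        _ = 1 / L := by field_simp
    calc (∑ l ∈ Finset.Icc 2 M, _) ≤ (Finset.Icc 2 M).card • (1/L) :=
          Finset.sum_le_card_nsmul _ _ _ hterm
      _ = ((Finset.Icc 2 M).card : ℝ) * (1/L) := by rw [nsmul_eq_mul]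
      _ ≤ (Real.sqrt L / Real.sqrt (2*cs)) * (1/L) := by
          apply mul_le_mul_of_nonneg_right _ (by positivity)
          calc ((Finset.Icc 2 M).card : ℝ) ≤ (M:ℝ) := by
                have hc : (Finset.Icc 2 M).card ≤ M := by rw [Nat.card_Icc]; omega
                exact_mod_cast hc
            _ ≤ Real.sqrt L / Real.sqrt (2*cs) := Nat.floor_le (by positivity)
      _ = (Real.sqrt (2*cs))⁻¹ * (Real.sqrt L)⁻¹ := by
          have hsL : Real.sqrt L * Real.sqrt L = L := Real.mul_self_sqrt hL0.le
          have hsLpos : 0 < Real.sqrt L := Real.sqrt_pos.2 hL0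
          field_simp
          linear_combination hsL
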